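/- Let n = 2^ℓ and m = 5ℓ. In the even real Clifford algebra CL_m there exist elements h_1,...,h_n, h'_1,...,h'_n and an idempotent e such that h_j h'_j = e for all j, h_j h'_k = 0 for all j ≠ k, and the norm satisfies |e|² = 1/2^ℓ, where |Σ_S c_S e_S|² = Σ_S c_S². -/

import Mathlib

/-- The real Clifford algebra `CL'_m` modelled concretely: an element is the
coefficient vector `(c_S)_{S ⊆ [m]}` of `Σ_S c_S e_S`; multiplication is determined by
`e_i² = 1`, `e_i e_j = -e_j e_i` (`i ≠ j`), which gives
`e_S e_T = (-1)^{#{(s,t) ∈ S×T : s > t}} e_{S ∆ T}`. -/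
noncomputable def clMul {m : ℕ} (f g : Finset (Fin m) → ℝ) : Finset (Fin m) → ℝ :=
  fun U => ∑ S : Finset (Fin m), ∑ T : Finset (Fin m),
    if symmDiff S T = U then
      (-1 : ℝ) ^ (((S ×ˢ T).filter fun p => p.2 < p.1).card) * f S * g T
    else 0

namespace CliffordAux

variable {m : ℕ}

def esign (S T : Finset (Fin m)) : ℝ :=
  (-1 : ℝ) ^ (((S ×ˢ T).filter fun p => p.2 < p.1).card)

def bas (S : Finset (Fin m)) : Finset (Fin m) → ℝ := fun U => if U = S then 1 else 0

noncomputable def cm (f g : Finset (Fin m) → ℝ) : Finset (Fin m) → ℝ :=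
  fun U => ∑ S : Finset (Fin m), ∑ T : Finset (Fin m),
    if symmDiff S T = U then esign S T * f S * g T else 0

theorem clMul_eq_cm : @clMul m = @cm m := rfl

lemma ff_eq_sum (S T : Finset (Fin m)) :
    ((S ×ˢ T).filter fun p => p.2 < p.1).card = ∑ s ∈ S, (T.filter (· < s)).card := by
  rw [Finset.card_filter, Finset.sum_product]
  exact Finset.sum_congr rfl fun s _ => (Finset.card_filter _ _).symm

lemma sum_symmDiff_parity (S T : Finset (Fin m)) (g : Fin m → ℕ) :
    (∑ s ∈ symmDiff S T, g s) + 2 * ∑ s ∈ S ∩ T, g s = (∑ s ∈ S, g s) + ∑ s ∈ T, g s := by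
  have h1 : symmDiff S T ∪ (S ∩ T) = S ∪ T := by
    have := symmDiff_sup_inf (a := S) (b := T); simpa using this
  have h2 : Disjoint (symmDiff S T) (S ∩ T) := disjoint_symmDiff_inf S T
  rw [two_mul, ← add_assoc, ← Finset.sum_union h2, h1, Finset.sum_union_inter]

lemma esign_symmDiff_left (S T U : Finset (Fin m)) :
    esign (symmDiff S T) U = esign S U * esign T U := by
  unfold esign
  rw [← pow_add, ff_eq_sum, ff_eq_sum, ff_eq_sum]
  rw [← sum_symmDiff_parity S T (fun s => (U.filter (· < s)).card)]
  rw [pow_add, pow_mul]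
  norm_num

lemma ff_eq_sum' (S T : Finset (Fin m)) :
    ((S ×ˢ T).filter fun p => p.2 < p.1).card = ∑ t ∈ T, (S.filter (t < ·)).card := by
  rw [Finset.card_filter, Finset.sum_product, Finset.sum_comm]
  exact Finset.sum_congr rfl fun t _ => (Finset.card_filter _ _).symm

lemma esign_symmDiff_right (S T U : Finset (Fin m)) :
    esign S (symmDiff T U) = esign S T * esign S U := by
  unfold esign
  rw [← pow_add, ff_eq_sum', ff_eq_sum', ff_eq_sum']
  rw [← sum_symmDiff_parity T U (fun t => (S.filter (t < ·)).card)]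
  rw [pow_add, pow_mul]
  norm_num


-- basis multiplication
lemma cm_bas_bas (S T : Finset (Fin m)) :
    cm (bas S) (bas T) = esign S T • bas (symmDiff S T) := by
  funext U
  unfold cm bas
  simp only [mul_ite, ite_mul, mul_one, mul_zero, one_mul, zero_mul]
  rw [Finset.sum_eq_single S]
  · rw [Finset.sum_eq_single T]
    · simp only [if_pos rfl, Pi.smul_apply, smul_eq_mul]
      by_cases h : symmDiff S T = U
      · simp [h]
      · rw [if_neg h, if_neg (fun hh => h hh.symm), mul_zero]
    · intro T' _ hT'
      simp [hT']
    · simp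
  · intro S' _ hS'
    simp [hS']
  · simp

lemma cm_add_left (f f' g : Finset (Fin m) → ℝ) : cm (f + f') g = cm f g + cm f' g := by
  funext U
  simp only [cm, Pi.add_apply, ← Finset.sum_add_distrib]
  refine Finset.sum_congr rfl fun S _ => Finset.sum_congr rfl fun T _ => ?_
  split_ifs <;> ring

lemma cm_add_right (f g g' : Finset (Fin m) → ℝ) : cm f (g + g') = cm f g + cm f g' := by
  funext U
  simp only [cm, Pi.add_apply, ← Finset.sum_add_distrib]
  refine Finset.sum_congr rfl fun S _ => Finset.sum_congr rfl fun T _ => ?_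
  split_ifs <;> ring

lemma cm_smul_left (c : ℝ) (f g : Finset (Fin m) → ℝ) : cm (c • f) g = c • cm f g := by
  funext U
  simp only [cm, Pi.smul_apply, smul_eq_mul, Finset.mul_sum]
  refine Finset.sum_congr rfl fun S _ => Finset.sum_congr rfl fun T _ => ?_
  split_ifs <;> ring

lemma cm_smul_right (c : ℝ) (f g : Finset (Fin m) → ℝ) : cm f (c • g) = c • cm f g := by
  funext U
  simp only [cm, Pi.smul_apply, smul_eq_mul, Finset.mul_sum]
  refine Finset.sum_congr rfl fun S _ => Finset.sum_congr rfl fun T _ => ?_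
  split_ifs <;> ring

lemma cm_sum_left {ι : Type*} (s : Finset ι) (F : ι → Finset (Fin m) → ℝ) (g : Finset (Fin m) → ℝ) :
    cm (∑ i ∈ s, F i) g = ∑ i ∈ s, cm (F i) g := by
  classical
  induction s using Finset.induction_on with
  | empty =>
      funext U; simp [cm]
  | @insert _ _ h ih =>
      rw [Finset.sum_insert h, Finset.sum_insert h, cm_add_left, ih]

lemma cm_sum_right {ι : Type*} (s : Finset ι) (f : Finset (Fin m) → ℝ) (G : ι → Finset (Fin m) → ℝ) :
    cm f (∑ i ∈ s, G i) = ∑ i ∈ s, cm f (G i) := by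
  classical
  induction s using Finset.induction_on with
  | empty =>
      funext U; simp [cm]
  | @insert _ _ h ih =>
      rw [Finset.sum_insert h, Finset.sum_insert h, cm_add_right, ih]

lemma decomp (f : Finset (Fin m) → ℝ) : f = ∑ S : Finset (Fin m), f S • bas S := by
  funext U
  simp [bas, Finset.sum_ite_eq, Finset.sum_apply]


lemma cm_bas_right_expand (f : Finset (Fin m) → ℝ) (V : Finset (Fin m)) :
    cm (bas V) f = ∑ U : Finset (Fin m), (f U * esign V U) • bas (symmDiff V U) := by
  conv_lhs => rw [decomp f, cm_sum_right]
  refine Finset.sum_congr rfl fun U _ => ?_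
  rw [cm_smul_right, cm_bas_bas, smul_smul, mul_comm]

lemma cm_bas_left_expand (f : Finset (Fin m) → ℝ) (V : Finset (Fin m)) :
    cm f (bas V) = ∑ U : Finset (Fin m), (f U * esign U V) • bas (symmDiff U V) := by
  conv_lhs => rw [decomp f, cm_sum_left]
  refine Finset.sum_congr rfl fun U _ => ?_
  rw [cm_smul_left, cm_bas_bas, smul_smul]

lemma cm_expand (f g : Finset (Fin m) → ℝ) :
    cm f g = ∑ S : Finset (Fin m), ∑ T : Finset (Fin m),
      (f S * g T * esign S T) • bas (symmDiff S T) := by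
  conv_lhs => rw [decomp f, cm_sum_left]
  refine Finset.sum_congr rfl fun S _ => ?_
  rw [cm_smul_left, cm_bas_right_expand, Finset.smul_sum]
  refine Finset.sum_congr rfl fun T _ => ?_
  rw [smul_smul]; ring_nf

lemma cm_assoc (f g h : Finset (Fin m) → ℝ) : cm (cm f g) h = cm f (cm g h) := by
  have L : cm (cm f g) h = ∑ S : Finset (Fin m), ∑ T : Finset (Fin m), ∑ U : Finset (Fin m),
      (f S * g T * h U * (esign S T * esign (symmDiff S T) U)) •
        bas (symmDiff (symmDiff S T) U) := by
    rw [cm_expand f g, cm_sum_left]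
    refine Finset.sum_congr rfl fun S _ => ?_
    rw [cm_sum_left]
    refine Finset.sum_congr rfl fun T _ => ?_
    rw [cm_smul_left, cm_bas_right_expand, Finset.smul_sum]
    refine Finset.sum_congr rfl fun U _ => ?_
    rw [smul_smul]; congr 1; ring
  have R : cm f (cm g h) = ∑ T : Finset (Fin m), ∑ U : Finset (Fin m), ∑ S : Finset (Fin m),
      (f S * g T * h U * (esign T U * esign S (symmDiff T U))) •
        bas (symmDiff S (symmDiff T U)) := by
    rw [cm_expand g h, cm_sum_right]
    refine Finset.sum_congr rfl fun T _ => ?_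
    rw [cm_sum_right]
    refine Finset.sum_congr rfl fun U _ => ?_
    rw [cm_smul_right, cm_bas_left_expand, Finset.smul_sum]
    refine Finset.sum_congr rfl fun S _ => ?_
    rw [smul_smul]; congr 1; ring
  rw [L, R]
  rw [Finset.sum_comm]
  refine Finset.sum_congr rfl fun S _ => ?_
  rw [Finset.sum_comm]
  refine Finset.sum_congr rfl fun T _ => ?_
  refine Finset.sum_congr rfl fun U _ => ?_
  rw [symmDiff_assoc]
  congr 1
  rw [esign_symmDiff_left, esign_symmDiff_right]
  ring


-- cross lemmas
lemma esign_of_lt {S T : Finset (Fin m)} (h : ∀ s ∈ S, ∀ t ∈ T, s < t) : esign S T = 1 := by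
  unfold esign
  have : ((S ×ˢ T).filter fun p => p.2 < p.1) = ∅ := by
    rw [Finset.filter_eq_empty_iff]
    rintro ⟨a, b⟩ hab
    rw [Finset.mem_product] at hab
    exact not_lt_of_gt (h a hab.1 b hab.2)
  rw [this]; simp

lemma esign_of_gt {S T : Finset (Fin m)} (h : ∀ s ∈ S, ∀ t ∈ T, t < s) :
    esign S T = (-1 : ℝ) ^ (S.card * T.card) := by
  unfold esign
  have : ((S ×ˢ T).filter fun p => p.2 < p.1) = S ×ˢ T := by
    rw [Finset.filter_eq_self]
    rintro ⟨a, b⟩ hab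
    rw [Finset.mem_product] at hab
    exact h a hab.1 b hab.2
  rw [this, Finset.card_product]

lemma esign_empty_left (T : Finset (Fin m)) : esign ∅ T = 1 := by
  apply esign_of_lt; simp

lemma esign_empty_right (S : Finset (Fin m)) : esign S ∅ = 1 := by
  apply esign_of_gt; simp

-- strictMono image transfer
lemma esign_image {g : Fin 5 → Fin m} (hg : StrictMono g) (X Y : Finset (Fin 5)) :
    esign (X.image g) (Y.image g)
      = (-1 : ℝ) ^ (((X ×ˢ Y).filter fun p => p.2 < p.1).card) := by
  unfold esign
  congr 1
  have himg : ((X.image g) ×ˢ (Y.image g)).filter (fun p => p.2 < p.1)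
      = ((X ×ˢ Y).filter fun p => p.2 < p.1).image (Prod.map g g) := by
    ext ⟨a, b⟩
    simp only [Finset.mem_filter, Finset.mem_product, Finset.mem_image, Prod.map,
      Finset.mem_image, Prod.exists]
    constructor
    · rintro ⟨⟨⟨x, hx, rfl⟩, ⟨y, hy, rfl⟩⟩, hlt⟩
      exact ⟨x, y, ⟨⟨hx, hy⟩, hg.lt_iff_lt.mp hlt⟩, rfl⟩
    · rintro ⟨x, y, ⟨⟨hx, hy⟩, hlt⟩, h⟩
      cases h
      exact ⟨⟨⟨x, hx, rfl⟩, ⟨y, hy, rfl⟩⟩, hg hlt⟩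
  rw [himg, Finset.card_image_of_injective _ (Prod.map_injective.mpr ⟨hg.injective, hg.injective⟩)]


variable {ℓ : ℕ}

def pidx (i : Fin ℓ) (r : Fin 5) : Fin (5 * ℓ) :=
  ⟨5 * i.val + r.val, by have h1 := i.isLt; have h2 := r.isLt; omega⟩

lemma pidx_strictMono (i : Fin ℓ) : StrictMono (pidx i) := by
  intro r s hrs
  simp only [pidx, Fin.mk_lt_mk, Fin.lt_def]
  omega

def blk (i : Fin ℓ) (X : Finset (Fin 5)) : Finset (Fin (5 * ℓ)) := X.image (pidx i)

lemma blk_symmDiff (i : Fin ℓ) (X Y : Finset (Fin 5)) :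
    symmDiff (blk i X) (blk i Y) = blk i (symmDiff X Y) :=
  (Finset.image_symmDiff X Y (pidx_strictMono i).injective).symm

lemma blk_card (i : Fin ℓ) (X : Finset (Fin 5)) : (blk i X).card = X.card :=
  Finset.card_image_of_injective _ (pidx_strictMono i).injective

lemma blk_lt {i j : Fin ℓ} (hij : i < j) (X Y : Finset (Fin 5)) :
    ∀ s ∈ blk i X, ∀ t ∈ blk j Y, s < t := by
  intro s hs t ht
  simp only [blk, Finset.mem_image] at hs ht
  obtain ⟨r, _, rfl⟩ := hs
  obtain ⟨r', _, rfl⟩ := ht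
  simp only [pidx, Fin.mk_lt_mk]
  have := r.isLt; have := r'.isLt
  have : i.val < j.val := hij
  omega

lemma blk_disjoint {i j : Fin ℓ} (hij : i ≠ j) (X Y : Finset (Fin 5)) :
    Disjoint (blk i X) (blk j Y) := by
  rw [Finset.disjoint_left]
  intro a ha hb
  simp only [blk, Finset.mem_image] at ha hb
  obtain ⟨r, _, rfl⟩ := ha
  obtain ⟨r', _, heq⟩ := hb
  apply hij
  have h5 := r.isLt; have h5' := r'.isLt
  have : 5 * j.val + r'.val = 5 * i.val + r.val := congrArg Fin.val heq
  have hv : i.val = j.val := by omega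
  exact Fin.ext hv

lemma esign_blk_same (i : Fin ℓ) (X Y : Finset (Fin 5)) :
    esign (blk i X) (blk i Y)
      = (-1 : ℝ) ^ (((X ×ˢ Y).filter fun p => p.2 < p.1).card) :=
  esign_image (pidx_strictMono i) X Y

lemma esign_blk_ne {i j : Fin ℓ} (hij : i ≠ j) {X Y : Finset (Fin 5)}
    (hX : Even X.card) : esign (blk i X) (blk j Y) = 1 := by
  rcases lt_or_gt_of_ne hij with h | h
  · exact esign_of_lt (blk_lt h X Y)
  · rw [esign_of_gt (fun s hs t ht => blk_lt h Y X t ht s hs), blk_card, blk_card]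
    exact hX.mul_right _ |>.neg_one_pow

section biUnion
variable {m : ℕ}

lemma biUnion_symmDiff {f : Fin ℓ → Finset (Fin m)}
    (hd : ∀ i j, i ≠ j → Disjoint (f i) (f j)) (A B : Finset (Fin ℓ)) :
    (symmDiff A B).biUnion f = symmDiff (A.biUnion f) (B.biUnion f) := by
  ext x
  simp only [Finset.mem_biUnion, Finset.mem_symmDiff]
  constructor
  · rintro ⟨i, hi, hx⟩
    have key : ∀ C : Finset (Fin ℓ), (∃ j ∈ C, x ∈ f j) ↔ i ∈ C := by
      intro C
      constructor
      · rintro ⟨j, hj, hxj⟩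
        rcases eq_or_ne j i with rfl | hne
        · exact hj
        · exact absurd hx (Finset.disjoint_left.mp (hd j i hne) hxj)
      · intro h; exact ⟨i, h, hx⟩
    rw [key, key]
    exact hi
  · rintro (⟨⟨i, hi, hx⟩, hB⟩ | ⟨⟨i, hi, hx⟩, hA⟩)
    · exact ⟨i, Or.inl ⟨hi, fun h => hB ⟨i, h, hx⟩⟩, hx⟩
    · exact ⟨i, Or.inr ⟨hi, fun h => hA ⟨i, h, hx⟩⟩, hx⟩

lemma esign_biUnion_left {f : Fin ℓ → Finset (Fin m)}
    (hd : ∀ i j, i ≠ j → Disjoint (f i) (f j)) (A : Finset (Fin ℓ)) (T : Finset (Fin m)) :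
    esign (A.biUnion f) T = ∏ i ∈ A, esign (f i) T := by
  classical
  induction A using Finset.induction_on with
  | empty => simpa using esign_empty_left T
  | @insert a s ha ih =>
      rw [Finset.biUnion_insert, Finset.prod_insert ha]
      have hdisj : Disjoint (f a) (s.biUnion f) := by
        rw [Finset.disjoint_biUnion_right]
        exact fun i hi => hd a i (by rintro rfl; exact ha hi)
      have : f a ∪ s.biUnion f = symmDiff (f a) (s.biUnion f) := (hdisj.symmDiff_eq_sup).symm
      rw [this, esign_symmDiff_left, ih]

lemma esign_biUnion_right {f : Fin ℓ → Finset (Fin m)}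
    (hd : ∀ i j, i ≠ j → Disjoint (f i) (f j)) (S : Finset (Fin m)) (B : Finset (Fin ℓ)) :
    esign S (B.biUnion f) = ∏ j ∈ B, esign S (f j) := by
  classical
  induction B using Finset.induction_on with
  | empty => simpa using esign_empty_right S
  | @insert a s ha ih =>
      rw [Finset.biUnion_insert, Finset.prod_insert ha]
      have hdisj : Disjoint (f a) (s.biUnion f) := by
        rw [Finset.disjoint_biUnion_right]
        exact fun i hi => hd a i (by rintro rfl; exact ha hi)
      have : f a ∪ s.biUnion f = symmDiff (f a) (s.biUnion f) := (hdisj.symmDiff_eq_sup).symm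
      rw [this, esign_symmDiff_right, ih]

end biUnion

-- double biUnion of blocks
lemma esign_bb {X Y : Fin ℓ → Finset (Fin 5)} (hX : ∀ i, Even (X i).card)
    (A B : Finset (Fin ℓ)) :
    esign (A.biUnion fun i => blk i (X i)) (B.biUnion fun j => blk j (Y j))
      = ∏ i ∈ A ∩ B, esign (blk i (X i)) (blk i (Y i)) := by
  rw [esign_biUnion_left (fun i j h => blk_disjoint h _ _)]
  have step : ∀ i ∈ A, esign (blk i (X i)) (B.biUnion fun j => blk j (Y j))
      = if i ∈ B then esign (blk i (X i)) (blk i (Y i)) else 1 := by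
    intro i _
    rw [esign_biUnion_right (fun i j h => blk_disjoint h _ _)]
    rcases Finset.decidableMem i B with hiB | hiB
    · rw [if_neg hiB]
      apply Finset.prod_eq_one
      intro j hj
      exact esign_blk_ne (by rintro rfl; exact hiB hj) (hX i)
    · rw [if_pos hiB]
      rw [Finset.prod_eq_single i]
      · intro j _ hji
        exact esign_blk_ne (Ne.symm hji) (hX i)
      · intro h; exact absurd hiB h
  rw [Finset.prod_congr rfl step, Finset.prod_ite_mem]


end CliffordAux
namespace CliffordAux
section Construction
variable {ℓ : ℕ}

def SS : Finset (Fin 5) := {0,1,2,3}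
def ST : Finset (Fin 5) := {0,1,2,4}

lemma even_SS : Even (SS.card) := by decide
lemma even_ST : Even (ST.card) := by decide

def Uσ (A : Finset (Fin ℓ)) : Finset (Fin (5 * ℓ)) := A.biUnion fun i => blk i SS
def Vτ (A : Finset (Fin ℓ)) : Finset (Fin (5 * ℓ)) := A.biUnion fun i => blk i ST

lemma Uσ_symmDiff (A B : Finset (Fin ℓ)) :
    Uσ (symmDiff A B) = symmDiff (Uσ A) (Uσ B) :=
  biUnion_symmDiff (fun _ _ h => blk_disjoint h _ _) A B

lemma Vτ_symmDiff (A B : Finset (Fin ℓ)) :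
    Vτ (symmDiff A B) = symmDiff (Vτ A) (Vτ B) :=
  biUnion_symmDiff (fun _ _ h => blk_disjoint h _ _) A B

lemma Uσ_singleton (i : Fin ℓ) : Uσ {i} = blk i SS := Finset.singleton_biUnion

lemma Vτ_empty : Vτ (∅ : Finset (Fin ℓ)) = ∅ := Finset.biUnion_empty

-- concrete sign values
lemma sσσ (i : Fin ℓ) : esign (blk i SS) (blk i SS) = 1 := by
  rw [esign_blk_same]
  have h : ((SS ×ˢ SS).filter fun p : Fin 5 × Fin 5 => p.2 < p.1).card = 6 := by decide
  rw [h]; norm_num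

lemma sττ (i : Fin ℓ) : esign (blk i ST) (blk i ST) = 1 := by
  rw [esign_blk_same]
  have h : ((ST ×ˢ ST).filter fun p : Fin 5 × Fin 5 => p.2 < p.1).card = 6 := by decide
  rw [h]; norm_num

lemma sστ (i : Fin ℓ) : esign (blk i SS) (blk i ST) = 1 := by
  rw [esign_blk_same]
  have h : ((SS ×ˢ ST).filter fun p : Fin 5 × Fin 5 => p.2 < p.1).card = 6 := by decide
  rw [h]; norm_num

lemma sτσ (i : Fin ℓ) : esign (blk i ST) (blk i SS) = -1 := by
  rw [esign_blk_same]
  have h : ((ST ×ˢ SS).filter fun p : Fin 5 × Fin 5 => p.2 < p.1).card = 7 := by decide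
  rw [h]; norm_num

lemma esign_UU (A B : Finset (Fin ℓ)) : esign (Uσ A) (Uσ B) = 1 := by
  rw [show Uσ A = A.biUnion fun i => blk i SS from rfl,
    show Uσ B = B.biUnion fun i => blk i SS from rfl,
    esign_bb (fun _ => even_SS)]
  exact Finset.prod_eq_one fun i _ => sσσ i

lemma esign_VV (A B : Finset (Fin ℓ)) : esign (Vτ A) (Vτ B) = 1 := by
  rw [show Vτ A = A.biUnion fun i => blk i ST from rfl,
    show Vτ B = B.biUnion fun i => blk i ST from rfl,
    esign_bb (fun _ => even_ST)]
  exact Finset.prod_eq_one fun i _ => sττ i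

lemma esign_sV (i₀ : Fin ℓ) (C : Finset (Fin ℓ)) : esign (blk i₀ SS) (Vτ C) = 1 := by
  rw [← Uσ_singleton, show Uσ {i₀} = ({i₀} : Finset (Fin ℓ)).biUnion fun i => blk i SS from rfl,
    show Vτ C = C.biUnion fun i => blk i ST from rfl, esign_bb (fun _ => even_SS)]
  exact Finset.prod_eq_one fun i _ => sστ i

lemma esign_sU (i₀ : Fin ℓ) (B : Finset (Fin ℓ)) : esign (blk i₀ SS) (Uσ B) = 1 := by
  rw [← Uσ_singleton, show Uσ {i₀} = ({i₀} : Finset (Fin ℓ)).biUnion fun i => blk i SS from rfl,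
    show Uσ B = B.biUnion fun i => blk i SS from rfl, esign_bb (fun _ => even_SS)]
  exact Finset.prod_eq_one fun i _ => sσσ i

lemma esign_Us (A : Finset (Fin ℓ)) (i₀ : Fin ℓ) : esign (Uσ A) (blk i₀ SS) = 1 := by
  rw [← Uσ_singleton, show Uσ {i₀} = ({i₀} : Finset (Fin ℓ)).biUnion fun i => blk i SS from rfl,
    show Uσ A = A.biUnion fun i => blk i SS from rfl, esign_bb (fun _ => even_SS)]
  exact Finset.prod_eq_one fun i _ => sσσ i

lemma esign_Vs {C : Finset (Fin ℓ)} {i₀ : Fin ℓ} (h : i₀ ∈ C) :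
    esign (Vτ C) (blk i₀ SS) = -1 := by
  rw [← Uσ_singleton, show Uσ {i₀} = ({i₀} : Finset (Fin ℓ)).biUnion fun i => blk i SS from rfl,
    show Vτ C = C.biUnion fun i => blk i ST from rfl, esign_bb (fun _ => even_ST),
    Finset.inter_singleton_of_mem h, Finset.prod_singleton]
  exact sτσ i₀

lemma card_Uσ_even (A : Finset (Fin ℓ)) : Even (Uσ A).card := by
  rw [show Uσ A = A.biUnion fun i => blk i SS from rfl,
    Finset.card_biUnion (fun i _ j _ h => blk_disjoint h _ _)]
  apply Finset.even_sum
  intro i _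
  rw [blk_card]
  exact even_SS

lemma card_Vτ_even (A : Finset (Fin ℓ)) : Even (Vτ A).card := by
  rw [show Vτ A = A.biUnion fun i => blk i ST from rfl,
    Finset.card_biUnion (fun i _ j _ h => blk_disjoint h _ _)]
  apply Finset.even_sum
  intro i _
  rw [blk_card]
  exact even_ST

lemma mem_Uσ_iff (A : Finset (Fin ℓ)) (i : Fin ℓ) : pidx i 0 ∈ Uσ A ↔ i ∈ A := by
  constructor
  · intro h
    rw [show Uσ A = A.biUnion fun i => blk i SS from rfl, Finset.mem_biUnion] at h
    obtain ⟨j, hj, hmem⟩ := h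
    rcases eq_or_ne i j with rfl | hne
    · exact hj
    · exfalso
      have h0 : pidx i 0 ∈ blk i SS := by
        rw [blk, Finset.mem_image]
        exact ⟨0, by decide, rfl⟩
      exact Finset.disjoint_left.mp (blk_disjoint hne SS SS) h0 hmem
  · intro h
    rw [show Uσ A = A.biUnion fun i => blk i SS from rfl, Finset.mem_biUnion]
    exact ⟨i, h, by rw [blk, Finset.mem_image]; exact ⟨0, by decide, rfl⟩⟩

lemma Uσ_injective : Function.Injective (Uσ (ℓ := ℓ)) := by
  intro A B h
  ext i
  rw [← mem_Uσ_iff A i, ← mem_Uσ_iff B i, h]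

lemma Vτ_ne_empty {C : Finset (Fin ℓ)} (h : C.Nonempty) : Vτ C ≠ ∅ := by
  obtain ⟨i, hi⟩ := h
  intro hemp
  have : pidx i 0 ∈ Vτ C := by
    rw [show Vτ C = C.biUnion fun i => blk i ST from rfl, Finset.mem_biUnion]
    exact ⟨i, hi, by rw [blk, Finset.mem_image]; exact ⟨0, by decide, rfl⟩⟩
  rw [hemp] at this
  exact absurd this (Finset.notMem_empty _)

end Construction
end CliffordAux
set_option maxHeartbeats 1000000
namespace CliffordAux
section Algebra
variable {m : ℕ} {ℓ : ℕ}

lemma cm_apply (f g : Finset (Fin m) → ℝ) (U : Finset (Fin m)) :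
    cm f g U = ∑ S : Finset (Fin m), ∑ T : Finset (Fin m),
      if symmDiff S T = U then esign S T * f S * g T else 0 := rfl

lemma symmDiff_empty_left (U : Finset (Fin m)) : symmDiff (∅ : Finset (Fin m)) U = U := by
  ext x; simp [Finset.mem_symmDiff]

lemma symmDiff_empty_right (U : Finset (Fin m)) : symmDiff U (∅ : Finset (Fin m)) = U := by
  ext x; simp [Finset.mem_symmDiff]

lemma cm_one_left (f : Finset (Fin m) → ℝ) : cm (bas ∅) f = f := by
  rw [cm_bas_right_expand]
  have h : ∀ U : Finset (Fin m), (f U * esign ∅ U) • bas (symmDiff ∅ U) = f U • bas U := by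
    intro U
    rw [esign_empty_left, mul_one, symmDiff_empty_left]
  rw [Finset.sum_congr rfl fun U _ => h U, ← decomp]

lemma cm_one_right (f : Finset (Fin m) → ℝ) : cm f (bas ∅) = f := by
  rw [cm_bas_left_expand]
  have h : ∀ U : Finset (Fin m), (f U * esign U ∅) • bas (symmDiff U ∅) = f U • bas U := by
    intro U
    rw [esign_empty_right, mul_one, symmDiff_empty_right]
  rw [Finset.sum_congr rfl fun U _ => h U, ← decomp]

noncomputable def Ee (L : ℕ) : Finset (Fin (5 * L)) → ℝ :=
  (2 ^ L : ℝ)⁻¹ • ∑ A : Finset (Fin L), bas (Uσ A)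

lemma cm_VV (A B : Finset (Fin ℓ)) :
    cm (bas (Vτ A)) (bas (Vτ B)) = bas (Vτ (symmDiff A B)) := by
  rw [cm_bas_bas, esign_VV, one_smul, ← Vτ_symmDiff]

lemma cm_EE : cm (Ee ℓ) (Ee ℓ) = Ee ℓ := by
  have row : ∀ A : Finset (Fin ℓ),
      cm (bas (Uσ A)) (∑ B : Finset (Fin ℓ), bas (Uσ B))
        = ∑ B : Finset (Fin ℓ), bas (Uσ B) := by
    intro A
    rw [cm_sum_right]
    have e1 : ∀ B : Finset (Fin ℓ), cm (bas (Uσ A)) (bas (Uσ B)) = bas (Uσ (symmDiff A B)) := by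
      intro B; rw [cm_bas_bas, esign_UU, one_smul, ← Uσ_symmDiff]
    rw [Finset.sum_congr rfl fun B _ => e1 B]
    exact Fintype.sum_equiv
      ⟨fun B => symmDiff A B, fun B => symmDiff A B,
        fun B => symmDiff_symmDiff_cancel_left A B, fun B => symmDiff_symmDiff_cancel_left A B⟩
      _ _ (fun B => rfl)
  unfold Ee
  rw [cm_smul_left, cm_smul_right, cm_sum_left,
    Finset.sum_congr rfl fun A _ => row A, Finset.sum_const, Finset.card_univ,
    Fintype.card_finset, Fintype.card_fin,
    ← Nat.cast_smul_eq_nsmul ℝ, smul_smul, smul_smul]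
  congr 1
  have h2 : (2 : ℝ) ^ ℓ ≠ 0 := by positivity
  push_cast
  field_simp

lemma symmDiff_aux (a c b s : Finset (Fin m)) :
    symmDiff (symmDiff (symmDiff a s) c) (symmDiff b s)
      = symmDiff (symmDiff a c) b := by
  ext x; simp only [Finset.mem_symmDiff]; tauto

lemma symmDiff_singleton_ne (A : Finset (Fin ℓ)) (i : Fin ℓ) : symmDiff A {i} ≠ A := by
  intro h
  have := Finset.ext_iff.mp h i
  simp [Finset.mem_symmDiff] at this

lemma key_zero {C : Finset (Fin ℓ)} (hC : C.Nonempty) :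
    cm (cm (Ee ℓ) (bas (Vτ C))) (Ee ℓ) = 0 := by
  obtain ⟨i₀, hi₀⟩ := hC
  have step1 : cm (Ee ℓ) (bas (Vτ C))
      = (2 ^ ℓ : ℝ)⁻¹ • ∑ A : Finset (Fin ℓ),
          esign (Uσ A) (Vτ C) • bas (symmDiff (Uσ A) (Vτ C)) := by
    unfold Ee
    rw [cm_smul_left, cm_sum_left]
    congr 1
    exact Finset.sum_congr rfl fun A _ => cm_bas_bas _ _
  rw [step1]
  unfold Ee
  rw [cm_smul_left, cm_smul_right, cm_sum_left]
  have step2 : ∀ A : Finset (Fin ℓ),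
      cm (esign (Uσ A) (Vτ C) • bas (symmDiff (Uσ A) (Vτ C)))
        (∑ B : Finset (Fin ℓ), bas (Uσ B))
      = ∑ B : Finset (Fin ℓ),
          (esign (Uσ A) (Vτ C) * esign (symmDiff (Uσ A) (Vτ C)) (Uσ B)) •
            bas (symmDiff (symmDiff (Uσ A) (Vτ C)) (Uσ B)) := by
    intro A
    rw [cm_smul_left, cm_sum_right, Finset.smul_sum]
    exact Finset.sum_congr rfl fun B _ => by rw [cm_bas_bas, smul_smul]
  rw [Finset.sum_congr rfl fun A _ => step2 A]
  have main : ∑ A : Finset (Fin ℓ), ∑ B : Finset (Fin ℓ),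
      (esign (Uσ A) (Vτ C) * esign (symmDiff (Uσ A) (Vτ C)) (Uσ B)) •
        bas (symmDiff (symmDiff (Uσ A) (Vτ C)) (Uσ B)) = 0 := by
    rw [← Finset.sum_product']
    apply Finset.sum_ninvolution
      (fun p : Finset (Fin ℓ) × Finset (Fin ℓ) => (symmDiff p.1 {i₀}, symmDiff p.2 {i₀}))
    · rintro ⟨A, B⟩
      simp only
      have hU : Uσ (symmDiff A {i₀}) = symmDiff (Uσ A) (blk i₀ SS) := by
        rw [Uσ_symmDiff, Uσ_singleton]
      have hU' : Uσ (symmDiff B {i₀}) = symmDiff (Uσ B) (blk i₀ SS) := by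
        rw [Uσ_symmDiff, Uσ_singleton]
      rw [hU, hU']
      have hc1 : esign (symmDiff (Uσ A) (blk i₀ SS)) (Vτ C) = esign (Uσ A) (Vτ C) := by
        rw [esign_symmDiff_left, esign_sV, mul_one]
      have hset : symmDiff (symmDiff (symmDiff (Uσ A) (blk i₀ SS)) (Vτ C))
          (symmDiff (Uσ B) (blk i₀ SS))
          = symmDiff (symmDiff (Uσ A) (Vτ C)) (Uσ B) := symmDiff_aux _ _ _ _
      have hc2 : esign (symmDiff (symmDiff (Uσ A) (blk i₀ SS)) (Vτ C))
          (symmDiff (Uσ B) (blk i₀ SS))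
          = -(esign (symmDiff (Uσ A) (Vτ C)) (Uσ B)) := by
        rw [symmDiff_right_comm]
        simp only [esign_symmDiff_left, esign_symmDiff_right, esign_Us, esign_Vs hi₀,
          esign_sU, sσσ, esign_sV]
        ring
      rw [hc1, hc2, hset]
      rw [mul_neg, neg_smul]
      exact add_neg_cancel _
    · rintro ⟨A, B⟩ _
      intro h
      exact symmDiff_singleton_ne A i₀ (congrArg Prod.fst h)
    · rintro ⟨A, B⟩
      exact Finset.mem_product.mpr ⟨Finset.mem_univ _, Finset.mem_univ _⟩
    · rintro ⟨A, B⟩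
      simp only [Prod.mk.injEq]
      exact ⟨symmDiff_symmDiff_cancel_right {i₀} A, symmDiff_symmDiff_cancel_right {i₀} B⟩
  rw [main]
  simp

lemma cm_main (A B : Finset (Fin ℓ)) :
    cm (cm (Ee ℓ) (bas (Vτ A))) (cm (bas (Vτ B)) (Ee ℓ))
      = if A = B then Ee ℓ else 0 := by
  have hre : cm (cm (Ee ℓ) (bas (Vτ A))) (cm (bas (Vτ B)) (Ee ℓ))
      = cm (cm (Ee ℓ) (bas (Vτ (symmDiff A B)))) (Ee ℓ) := by
    rw [← cm_assoc, cm_assoc (Ee ℓ) (bas (Vτ A)) (bas (Vτ B)), cm_VV]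
  rw [hre]
  by_cases h : A = B
  · subst h
    rw [if_pos rfl, symmDiff_self]
    have : Vτ (⊥ : Finset (Fin ℓ)) = ∅ := Vτ_empty
    rw [this, cm_one_right, cm_EE]
  · rw [if_neg h]
    apply key_zero
    rw [Finset.nonempty_iff_ne_empty]
    intro hemp
    exact h (by simpa [symmDiff_eq_bot] using hemp)

end Algebra
end CliffordAux
namespace CliffordAux
section Even
variable {m : ℕ} {ℓ : ℕ}

lemma card_symmDiff_even {S T : Finset (Fin m)} (hS : Even S.card) (hT : Even T.card) :
    Even (symmDiff S T).card := by
  have h := sum_symmDiff_parity S T (fun _ => 1)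
  simp only [Finset.sum_const, smul_eq_mul, mul_one] at h
  rw [Nat.even_iff] at hS hT ⊢
  omega

lemma cm_even {f g : Finset (Fin m) → ℝ} (hf : ∀ S, Odd S.card → f S = 0)
    (hg : ∀ S, Odd S.card → g S = 0) : ∀ U, Odd U.card → cm f g U = 0 := by
  intro U hU
  rw [cm_apply]
  apply Finset.sum_eq_zero
  intro S _
  apply Finset.sum_eq_zero
  intro T _
  split_ifs with h
  · rcases Nat.even_or_odd S.card with hS | hS
    · rcases Nat.even_or_odd T.card with hT | hT
      · exact absurd (h ▸ card_symmDiff_even hS hT) (Nat.not_even_iff_odd.mpr hU)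
      · rw [hg T hT, mul_zero]
    · rw [hf S hS, mul_zero, zero_mul]
  · rfl

lemma Ee_even : ∀ S, Odd S.card → Ee ℓ S = 0 := by
  intro S hS
  unfold Ee
  simp only [Pi.smul_apply, Finset.sum_apply, smul_eq_mul]
  have : ∀ A : Finset (Fin ℓ), bas (Uσ A) S = 0 := by
    intro A
    unfold bas
    rw [if_neg]
    intro h
    exact (Nat.not_even_iff_odd.mpr hS) (h ▸ card_Uσ_even A)
  rw [Finset.sum_congr rfl fun A _ => this A]
  simp

lemma bas_Vτ_even (A : Finset (Fin ℓ)) : ∀ S, Odd S.card → bas (Vτ A) S = 0 := by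
  intro S hS
  unfold bas
  rw [if_neg]
  intro h
  exact (Nat.not_even_iff_odd.mpr hS) (h ▸ card_Vτ_even A)

lemma norm_Ee : ∑ S : Finset (Fin (5 * ℓ)), (Ee ℓ S) ^ 2 = 1 / 2 ^ ℓ := by
  unfold Ee
  simp only [Pi.smul_apply, Finset.sum_apply, smul_eq_mul]
  have hterm : ∀ S : Finset (Fin (5 * ℓ)),
      ((2 ^ ℓ : ℝ)⁻¹ * ∑ A : Finset (Fin ℓ), bas (Uσ A) S) ^ 2
        = ((2 ^ ℓ : ℝ)⁻¹) ^ 2 * ∑ A : Finset (Fin ℓ), ∑ B : Finset (Fin ℓ),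
            bas (Uσ A) S * bas (Uσ B) S := by
    intro S
    rw [mul_pow, sq (∑ A : Finset (Fin ℓ), bas (Uσ A) S), Finset.sum_mul_sum]
  rw [Finset.sum_congr rfl fun S _ => hterm S, ← Finset.mul_sum]
  rw [Finset.sum_comm]
  have inner : ∀ A : Finset (Fin ℓ),
      ∑ S : Finset (Fin (5 * ℓ)), ∑ B : Finset (Fin ℓ), bas (Uσ A) S * bas (Uσ B) S = 1 := by
    intro A
    rw [Finset.sum_comm]
    have h1 : ∀ B : Finset (Fin ℓ),
        ∑ S : Finset (Fin (5 * ℓ)), bas (Uσ A) S * bas (Uσ B) S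
          = if Uσ A = Uσ B then 1 else 0 := by
      intro B
      unfold bas
      simp only [ite_mul, one_mul, zero_mul]
      rw [Finset.sum_ite_eq' Finset.univ (Uσ A) (fun S => if S = Uσ B then (1:ℝ) else 0)]
      simp
    rw [Finset.sum_congr rfl fun B _ => h1 B]
    rw [Finset.sum_eq_single A]
    · simp
    · intro B _ hBA
      rw [if_neg (fun h => hBA (Uσ_injective h).symm)]
    · intro h
      exact absurd (Finset.mem_univ A) h
  rw [Finset.sum_congr rfl fun A _ => inner A, Finset.sum_const, Finset.card_univ,
    Fintype.card_finset, Fintype.card_fin]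
  have h2 : (2 : ℝ) ^ ℓ ≠ 0 := by positivity
  simp only [nsmul_eq_mul, mul_one, Nat.cast_pow, Nat.cast_ofNat]
  field_simp

end Even
end CliffordAux

open CliffordAux

/-- For `n = 2^ℓ` and `m = 5ℓ`, there exist `h_1,…,h_n, h'_1,…,h'_n` and an idempotent
`e` in the even Clifford algebra `CL_m` (all coefficients on odd-cardinality basis
elements vanish) with `h_j h'_j = e` for all `j`, `h_j h'_k = 0` for `j ≠ k`, and
`|e|² = Σ_S c_S(e)² = 1/2^ℓ`. -/
theorem exists_clifford_system (ℓ : ℕ) :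
    ∃ (h h' : Fin (2 ^ ℓ) → (Finset (Fin (5 * ℓ)) → ℝ)) (e : Finset (Fin (5 * ℓ)) → ℝ),
      (∀ j S, Odd S.card → h j S = 0) ∧
      (∀ j S, Odd S.card → h' j S = 0) ∧
      (∀ S, Odd S.card → e S = 0) ∧
      (∀ j, clMul (h j) (h' j) = e) ∧
      (∀ j k, j ≠ k → clMul (h j) (h' k) = 0) ∧
      clMul e e = e ∧
      (∑ S : Finset (Fin (5 * ℓ)), (e S) ^ 2) = 1 / 2 ^ ℓ := by
  classical
  have hcard : Fintype.card (Finset (Fin ℓ)) = 2 ^ ℓ := by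
    simp [Fintype.card_finset]
  let eqv : Fin (2 ^ ℓ) ≃ Finset (Fin ℓ) := (Fintype.equivFinOfCardEq hcard).symm
  refine ⟨fun j => cm (Ee ℓ) (bas (Vτ (eqv j))), fun j => cm (bas (Vτ (eqv j))) (Ee ℓ),
    Ee ℓ, ?_, ?_, ?_, ?_, ?_, ?_, ?_⟩
  · intro j S hS
    exact cm_even Ee_even (bas_Vτ_even (eqv j)) S hS
  · intro j S hS
    exact cm_even (bas_Vτ_even (eqv j)) Ee_even S hS
  · exact Ee_even
  · intro j
    rw [clMul_eq_cm, cm_main]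
    exact if_pos rfl
  · intro j k hjk
    rw [clMul_eq_cm, cm_main]
    exact if_neg (fun h => hjk (eqv.injective h))
  · rw [clMul_eq_cm]
    exact cm_EE
  · exact norm_Ee
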